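/- For the unit square grid (a = b = 1) and every ℓ > 0, the maximum number of tiles visited by a segment of length ℓ is M(ℓ) = ⌊√(2·⌈ℓ²⌉ − 2)⌋ + 3. -/

import Mathlib

open Set

/-- Interior of the tile `T(k,l)` of the `a×b` grid. -/
noncomputable def tileInt (a b : ℝ) (k l : ℤ) : Set (ℝ × ℝ) :=
  Set.Ioo ((k : ℝ) * a) (((k : ℝ) + 1) * a) ×ˢ Set.Ioo ((l : ℝ) * b) (((l : ℝ) + 1) * b)

/-- Number of tiles of the `a×b` grid visited by the closed segment with endpoints `p`, `q`. -/
noncomputable def visitCount (a b : ℝ) (p q : ℝ × ℝ) : ℕ :=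
  Set.ncard {kl : ℤ × ℤ | (segment ℝ p q ∩ tileInt a b kl.1 kl.2).Nonempty}

/-- Normalized width of the discrete bounding rectangle of the segment with endpoints `p`, `q`. -/
noncomputable def normWidth (a : ℝ) (p q : ℝ × ℝ) : ℤ :=
  ⌈max p.1 q.1 / a⌉ - ⌊min p.1 q.1 / a⌋

/-- Normalized height of the discrete bounding rectangle of the segment with endpoints `p`, `q`. -/
noncomputable def normHeight (b : ℝ) (p q : ℝ × ℝ) : ℤ :=
  ⌈max p.2 q.2 / b⌉ - ⌊min p.2 q.2 / b⌋

/-- Euclidean length of the segment with endpoints `p`, `q`. -/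
noncomputable def segLen (p q : ℝ × ℝ) : ℝ :=
  Real.sqrt ((p.1 - q.1) ^ 2 + (p.2 - q.2) ^ 2)

/-- `maxTiles a b ℓ` : maximum number of tiles of the `a×b` grid visited by a segment of length `ℓ`. -/
noncomputable def maxTiles (a b ℓ : ℝ) : ℕ :=
  sSup {n : ℕ | ∃ p q : ℝ × ℝ, segLen p q = ℓ ∧ visitCount a b p q = n}

/-- `infLen a b N` : infimum of lengths of segments visiting at least `N` tiles of the `a×b` grid. -/
noncomputable def infLen (a b : ℝ) (N : ℕ) : ℝ :=
  sInf {ℓ : ℝ | 0 < ℓ ∧ ∃ p q : ℝ × ℝ, segLen p q = ℓ ∧ N ≤ visitCount a b p q}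

/-- `minIntLen N` : minimum positive integer length of a segment visiting at least `N` tiles
of the unit square grid. -/
noncomputable def minIntLen (N : ℕ) : ℕ :=
  sInf {L : ℕ | 1 ≤ L ∧ ∃ p q : ℝ × ℝ, segLen p q = (L : ℝ) ∧ N ≤ visitCount 1 1 p q}


lemma exists_notin_countable {α β : ℝ} (h : α < β) {B : Set ℝ} (hB : B.Countable) :
    ∃ t ∈ Ioo α β, t ∉ B := by
  by_contra hc
  push_neg at hc
  have hsub : Ioo α β ⊆ B := fun t ht => hc t ht
  have h1 : MeasureTheory.volume (Ioo α β) = 0 :=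
    le_antisymm (le_trans (MeasureTheory.measure_mono hsub)
      (le_of_eq (hB.measure_zero _))) zero_le
  rw [Real.volume_Ioo] at h1
  simp [ENNReal.ofReal_eq_zero] at h1
  linarith

lemma fr {a c : ℝ} (h1 : a ≤ c) (h2 : c < (⌊a⌋:ℝ) + 1) : ⌊c⌋ = ⌊a⌋ := by
  have := Int.floor_le_floor h1
  have h3 : ⌊c⌋ < ⌊a⌋ + 1 := by
    rw [Int.floor_lt]; exact_mod_cast h2
  omega

lemma flo {a c : ℝ} (h1 : (⌊a⌋:ℝ) < c) (h2 : c < a) : ⌊c⌋ = ⌊a⌋ :=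
  le_antisymm (Int.floor_le_floor h2.le) (Int.le_floor.2 h1.le)

noncomputable def gf (dx dy θ θ' t : ℝ) : ℤ := ⌊t * dx - θ⌋ + ⌊t * dy - θ'⌋

lemma gf_mono {dx dy θ θ' : ℝ} (hdx : 0 < dx) (hdy : 0 < dy) {s t : ℝ} (hst : s ≤ t) :
    gf dx dy θ θ' s ≤ gf dx dy θ θ' t :=
  add_le_add (Int.floor_le_floor (by nlinarith)) (Int.floor_le_floor (by nlinarith))

lemma pick_non {dx dy θ θ' α β : ℝ} (hab : α < β) (hdx : 0 < dx) (hdy : 0 < dy) :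
    ∃ t ∈ Ioo α β, (∀ n : ℤ, t * dx - θ ≠ (n:ℝ)) ∧ (∀ n : ℤ, t * dy - θ' ≠ (n:ℝ)) := by
  have hB : ((⋃ n : ℤ, {((n:ℝ) + θ) / dx}) ∪ (⋃ n : ℤ, {((n:ℝ) + θ') / dy}) : Set ℝ).Countable :=
    (Set.countable_iUnion fun _ => Set.countable_singleton _).union
      (Set.countable_iUnion fun _ => Set.countable_singleton _)
  obtain ⟨t, ht, hnB⟩ := exists_notin_countable hab hB
  refine ⟨t, ht, fun n hn => hnB ?_, fun n hn => hnB ?_⟩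
  · left
    rw [Set.mem_iUnion]
    exact ⟨n, by rw [mem_singleton_iff]; field_simp; linarith⟩
  · right
    rw [Set.mem_iUnion]
    exact ⟨n, by rw [mem_singleton_iff]; field_simp; linarith⟩

lemma window_eq {d c t0 t ε : ℝ} (hd : 0 < d) (h1 : t0 - ε < t) (h2 : t < t0)
    (h3 : ε * d ≤ (t0 * d - c) - (⌊t0 * d - c⌋ : ℝ)) : ⌊t * d - c⌋ = ⌊t0 * d - c⌋ := by
  apply flo
  · nlinarith
  · nlinarith

lemma window_pred {d c t0 t ε : ℝ} {n : ℤ} (hd : 0 < d) (h1 : t0 - ε < t) (h2 : t < t0)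
    (h3 : ε * d ≤ 1) (hn : t0 * d - c = (n:ℝ)) : ⌊t * d - c⌋ = n - 1 := by
  rw [Int.floor_eq_iff]
  constructor
  · push_cast; nlinarith
  · push_cast; nlinarith

set_option maxHeartbeats 1000000 in
lemma key_ivt {dx dy θ θ' : ℝ} (hdx : 0 < dx) (hdy : 0 < dy)
    (havoid : ∀ t : ℝ, ¬((∃ n : ℤ, t * dx - θ = (n:ℝ)) ∧ (∃ n : ℤ, t * dy - θ' = (n:ℝ))))
    (h1x : ∀ n : ℤ, 1 * dx - θ ≠ (n:ℝ)) (h1y : ∀ n : ℤ, 1 * dy - θ' ≠ (n:ℝ))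
    (m : ℤ) (hm0 : gf dx dy θ θ' 0 ≤ m) (hm1 : m ≤ gf dx dy θ θ' 1) :
    ∃ t, 0 ≤ t ∧ t ≤ 1 ∧ gf dx dy θ θ' t = m ∧
      (∀ n : ℤ, t * dx - θ ≠ (n:ℝ)) ∧ (∀ n : ℤ, t * dy - θ' ≠ (n:ℝ)) := by
  set g := gf dx dy θ θ' with hg
  set S := {t : ℝ | t ∈ Icc (0:ℝ) 1 ∧ m < g t} with hS
  by_cases hSne : S.Nonempty
  · -- case B
    have hbdd : BddBelow S := ⟨0, fun t ht => ht.1.1⟩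
    set t0 := sInf S with ht0
    have ht00 : 0 ≤ t0 := le_csInf hSne (fun t ht => ht.1.1)
    have ht01 : t0 ≤ 1 := by
      obtain ⟨t, ht⟩ := hSne
      exact le_trans (csInf_le hbdd ht) ht.1.2
    have hleft : ∀ s, 0 ≤ s → s < t0 → g s ≤ m := by
      intro s hs0 hst
      by_contra hc
      push_neg at hc
      exact absurd (csInf_le hbdd ⟨⟨hs0, le_trans hst.le ht01⟩, hc⟩) (not_le.2 hst)
    -- (2) : m < g t0
    have hgt0 : m < g t0 := by
      by_contra hc
      push_neg at hc
      set a := t0 * dx - θ with ha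
      set b := t0 * dy - θ' with hb
      have hεx : 0 < ((⌊a⌋:ℝ) + 1 - a) / dx :=
        div_pos (by linarith [Int.lt_floor_add_one a]) hdx
      have hεy : 0 < ((⌊b⌋:ℝ) + 1 - b) / dy :=
        div_pos (by linarith [Int.lt_floor_add_one b]) hdy
      set ε := min (((⌊a⌋:ℝ) + 1 - a) / dx) (((⌊b⌋:ℝ) + 1 - b) / dy) with hε
      have hεpos : 0 < ε := lt_min hεx hεy
      obtain ⟨s, hsS, hs⟩ := (csInf_lt_iff hbdd hSne).mp (by linarith : sInf S < t0 + ε)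
      have hst0 : t0 ≤ s := csInf_le hbdd hsS
      have hgx : ⌊s * dx - θ⌋ = ⌊a⌋ := by
        apply fr (by nlinarith)
        have h1 : (s - t0) * dx < ε * dx := by nlinarith
        have h2 : ε * dx ≤ (⌊a⌋:ℝ) + 1 - a := by
          rw [hε]
          have := min_le_left (((⌊a⌋:ℝ) + 1 - a) / dx) (((⌊b⌋:ℝ) + 1 - b) / dy)
          calc min (((⌊a⌋:ℝ) + 1 - a) / dx) (((⌊b⌋:ℝ) + 1 - b) / dy) * dx
              ≤ (((⌊a⌋:ℝ) + 1 - a) / dx) * dx := by nlinarith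
            _ = (⌊a⌋:ℝ) + 1 - a := by field_simp
        nlinarith
      have hgy : ⌊s * dy - θ'⌋ = ⌊b⌋ := by
        apply fr (by nlinarith)
        have h1 : (s - t0) * dy < ε * dy := by nlinarith
        have h2 : ε * dy ≤ (⌊b⌋:ℝ) + 1 - b := by
          rw [hε]
          have := min_le_right (((⌊a⌋:ℝ) + 1 - a) / dx) (((⌊b⌋:ℝ) + 1 - b) / dy)
          calc min (((⌊a⌋:ℝ) + 1 - a) / dx) (((⌊b⌋:ℝ) + 1 - b) / dy) * dy
              ≤ (((⌊b⌋:ℝ) + 1 - b) / dy) * dy := by nlinarith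
            _ = (⌊b⌋:ℝ) + 1 - b := by field_simp
        nlinarith
      have : g s = g t0 := by rw [hg]; unfold gf; rw [hgx, hgy]
      have := hsS.2
      omega
    have ht0pos : 0 < t0 := by
      rcases lt_or_eq_of_le ht00 with h | h
      · exact h
      · exfalso
        rw [← h] at hgt0
        omega
    -- left analysis at t0
    have hav := havoid t0
    by_cases hA : ∃ n : ℤ, t0 * dx - θ = (n:ℝ)
    · -- x-coordinate integer at t0, y not
      have hBni : ∀ n : ℤ, t0 * dy - θ' ≠ (n:ℝ) := fun n hn => hav ⟨hA, ⟨n, hn⟩⟩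
      have hfb : (⌊t0 * dy - θ'⌋:ℝ) < t0 * dy - θ' :=
        lt_of_le_of_ne (Int.floor_le _) (fun h => hBni ⌊t0 * dy - θ'⌋ h.symm)
      set ε := min (min (1 / dx) (((t0 * dy - θ') - ⌊t0 * dy - θ'⌋) / dy)) t0 with hε
      have hεpos : 0 < ε :=
        lt_min (lt_min (by positivity) (div_pos (by linarith) hdy)) ht0pos
      obtain ⟨t, htIoo, htnx, htny⟩ := pick_non (θ := θ) (θ' := θ') (show t0 - ε < t0 by linarith) hdx hdy
      have hεt0 : ε ≤ t0 := min_le_right _ _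
      have ht0' : 0 ≤ t := by
        have := htIoo.1; linarith
      have htlt : t < t0 := htIoo.2
      obtain ⟨n, hn⟩ := hA
      have hfx : ⌊t * dx - θ⌋ = n - 1 := by
        apply window_pred hdx htIoo.1 htlt ?_ hn
        have h3 : ε ≤ 1 / dx := le_trans (min_le_left _ _) (min_le_left _ _)
        calc ε * dx ≤ (1 / dx) * dx := by nlinarith
          _ = 1 := by field_simp
      have hfy : ⌊t * dy - θ'⌋ = ⌊t0 * dy - θ'⌋ := by
        apply window_eq hdy htIoo.1 htlt
        have h3 : ε ≤ ((t0 * dy - θ') - ⌊t0 * dy - θ'⌋) / dy :=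
          le_trans (min_le_left _ _) (min_le_right _ _)
        calc ε * dy ≤ (((t0 * dy - θ') - ⌊t0 * dy - θ'⌋) / dy) * dy := by nlinarith
          _ = (t0 * dy - θ') - ⌊t0 * dy - θ'⌋ := by field_simp
      have hfa : ⌊t0 * dx - θ⌋ = n := by rw [hn]; exact Int.floor_intCast n
      have hgval : g t = g t0 - 1 := by
        rw [hg]; unfold gf; rw [hfx, hfy]
        omega
      have h1 : g t ≤ m := hleft t ht0' htlt
      have h2 : g t = m := by omega
      exact ⟨t, ht0', le_trans htlt.le ht01, h2, htnx, htny⟩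
    · by_cases hB : ∃ n : ℤ, t0 * dy - θ' = (n:ℝ)
      · -- y-coordinate integer at t0, x not
        have hAni : ∀ n : ℤ, t0 * dx - θ ≠ (n:ℝ) := fun n hn => hA ⟨n, hn⟩
        have hfa' : (⌊t0 * dx - θ⌋:ℝ) < t0 * dx - θ :=
          lt_of_le_of_ne (Int.floor_le _) (fun h => hAni ⌊t0 * dx - θ⌋ h.symm)
        set ε := min (min (1 / dy) (((t0 * dx - θ) - ⌊t0 * dx - θ⌋) / dx)) t0 with hε
        have hεpos : 0 < ε :=
          lt_min (lt_min (by positivity) (div_pos (by linarith) hdx)) ht0pos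
        obtain ⟨t, htIoo, htnx, htny⟩ := pick_non (θ := θ) (θ' := θ') (show t0 - ε < t0 by linarith) hdx hdy
        have hεt0 : ε ≤ t0 := min_le_right _ _
        have ht0' : 0 ≤ t := by have := htIoo.1; linarith
        have htlt : t < t0 := htIoo.2
        obtain ⟨n, hn⟩ := hB
        have hfy : ⌊t * dy - θ'⌋ = n - 1 := by
          apply window_pred hdy htIoo.1 htlt ?_ hn
          have h3 : ε ≤ 1 / dy := le_trans (min_le_left _ _) (min_le_left _ _)
          calc ε * dy ≤ (1 / dy) * dy := by nlinarith
            _ = 1 := by field_simp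
        have hfx : ⌊t * dx - θ⌋ = ⌊t0 * dx - θ⌋ := by
          apply window_eq hdx htIoo.1 htlt
          have h3 : ε ≤ ((t0 * dx - θ) - ⌊t0 * dx - θ⌋) / dx :=
            le_trans (min_le_left _ _) (min_le_right _ _)
          calc ε * dx ≤ (((t0 * dx - θ) - ⌊t0 * dx - θ⌋) / dx) * dx := by nlinarith
            _ = (t0 * dx - θ) - ⌊t0 * dx - θ⌋ := by field_simp
        have hfb' : ⌊t0 * dy - θ'⌋ = n := by rw [hn]; exact Int.floor_intCast n
        have hgval : g t = g t0 - 1 := by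
          rw [hg]; unfold gf; rw [hfx, hfy]
          omega
        have h1 : g t ≤ m := hleft t ht0' htlt
        have h2 : g t = m := by omega
        exact ⟨t, ht0', le_trans htlt.le ht01, h2, htnx, htny⟩
      · -- both noninteger : contradiction
        exfalso
        have hAni : ∀ n : ℤ, t0 * dx - θ ≠ (n:ℝ) := fun n hn => hA ⟨n, hn⟩
        have hBni : ∀ n : ℤ, t0 * dy - θ' ≠ (n:ℝ) := fun n hn => hB ⟨n, hn⟩
        have hfa' : (⌊t0 * dx - θ⌋:ℝ) < t0 * dx - θ :=
          lt_of_le_of_ne (Int.floor_le _) (fun h => hAni ⌊t0 * dx - θ⌋ h.symm)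
        have hfb' : (⌊t0 * dy - θ'⌋:ℝ) < t0 * dy - θ' :=
          lt_of_le_of_ne (Int.floor_le _) (fun h => hBni ⌊t0 * dy - θ'⌋ h.symm)
        set ε := min (min (((t0 * dx - θ) - ⌊t0 * dx - θ⌋) / dx)
          (((t0 * dy - θ') - ⌊t0 * dy - θ'⌋) / dy)) t0 with hε
        have hεpos : 0 < ε :=
          lt_min (lt_min (div_pos (by linarith) hdx) (div_pos (by linarith) hdy)) ht0pos
        obtain ⟨t, htIoo, htnx, htny⟩ := pick_non (θ := θ) (θ' := θ') (show t0 - ε < t0 by linarith) hdx hdy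
        have hεt0 : ε ≤ t0 := min_le_right _ _
        have ht0' : 0 ≤ t := by have := htIoo.1; linarith
        have htlt : t < t0 := htIoo.2
        have hfx : ⌊t * dx - θ⌋ = ⌊t0 * dx - θ⌋ := by
          apply window_eq hdx htIoo.1 htlt
          have h3 : ε ≤ ((t0 * dx - θ) - ⌊t0 * dx - θ⌋) / dx :=
            le_trans (min_le_left _ _) (min_le_left _ _)
          calc ε * dx ≤ (((t0 * dx - θ) - ⌊t0 * dx - θ⌋) / dx) * dx := by nlinarith
            _ = (t0 * dx - θ) - ⌊t0 * dx - θ⌋ := by field_simp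
        have hfy : ⌊t * dy - θ'⌋ = ⌊t0 * dy - θ'⌋ := by
          apply window_eq hdy htIoo.1 htlt
          have h3 : ε ≤ ((t0 * dy - θ') - ⌊t0 * dy - θ'⌋) / dy :=
            le_trans (min_le_left _ _) (min_le_right _ _)
          calc ε * dy ≤ (((t0 * dy - θ') - ⌊t0 * dy - θ'⌋) / dy) * dy := by nlinarith
            _ = (t0 * dy - θ') - ⌊t0 * dy - θ'⌋ := by field_simp
        have hgval : g t = g t0 := by rw [hg]; unfold gf; rw [hfx, hfy]
        have h1 : g t ≤ m := hleft t ht0' htlt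
        omega
  · -- case A : S empty, m = g 1
    have hg1 : g 1 ≤ m := by
      by_contra hc
      push_neg at hc
      exact hSne ⟨1, ⟨⟨zero_le_one, le_rfl⟩, hc⟩⟩
    have hm : m = g 1 := le_antisymm hm1 hg1
    have hfa' : (⌊1 * dx - θ⌋:ℝ) < 1 * dx - θ :=
      lt_of_le_of_ne (Int.floor_le _) (fun h => h1x ⌊1 * dx - θ⌋ h.symm)
    have hfb' : (⌊1 * dy - θ'⌋:ℝ) < 1 * dy - θ' :=
      lt_of_le_of_ne (Int.floor_le _) (fun h => h1y ⌊1 * dy - θ'⌋ h.symm)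
    set ε := min (min (((1 * dx - θ) - ⌊1 * dx - θ⌋) / dx)
      (((1 * dy - θ') - ⌊1 * dy - θ'⌋) / dy)) 1 with hε
    have hεpos : 0 < ε :=
      lt_min (lt_min (div_pos (by linarith) hdx) (div_pos (by linarith) hdy)) one_pos
    obtain ⟨t, htIoo, htnx, htny⟩ := pick_non (θ := θ) (θ' := θ') (show 1 - ε < 1 by linarith) hdx hdy
    have hε1 : ε ≤ 1 := min_le_right _ _
    have ht0' : 0 ≤ t := by have := htIoo.1; linarith
    have htlt : t < 1 := htIoo.2
    have hfx : ⌊t * dx - θ⌋ = ⌊1 * dx - θ⌋ := by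
      apply window_eq hdx htIoo.1 htlt
      have h3 : ε ≤ ((1 * dx - θ) - ⌊1 * dx - θ⌋) / dx :=
        le_trans (min_le_left _ _) (min_le_left _ _)
      calc ε * dx ≤ (((1 * dx - θ) - ⌊1 * dx - θ⌋) / dx) * dx := by nlinarith
        _ = (1 * dx - θ) - ⌊1 * dx - θ⌋ := by field_simp
    have hfy : ⌊t * dy - θ'⌋ = ⌊1 * dy - θ'⌋ := by
      apply window_eq hdy htIoo.1 htlt
      have h3 : ε ≤ ((1 * dy - θ') - ⌊1 * dy - θ'⌋) / dy :=
        le_trans (min_le_left _ _) (min_le_right _ _)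
      calc ε * dy ≤ (((1 * dy - θ') - ⌊1 * dy - θ'⌋) / dy) * dy := by nlinarith
        _ = (1 * dy - θ') - ⌊1 * dy - θ'⌋ := by field_simp
    have hgval : g t = g 1 := by rw [hg]; unfold gf; rw [hfx, hfy]
    exact ⟨t, ht0', htlt.le, by omega, htnx, htny⟩

lemma seg_param {p q z : ℝ × ℝ} (hz : z ∈ segment ℝ p q) :
    ∃ t : ℝ, 0 ≤ t ∧ t ≤ 1 ∧ z.1 = p.1 + t * (q.1 - p.1) ∧ z.2 = p.2 + t * (q.2 - p.2) := by
  rw [segment_eq_image'] at hz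
  obtain ⟨t, ht, rfl⟩ := hz
  exact ⟨t, ht.1, ht.2, by simp [mul_comm], by simp [mul_comm]⟩

lemma scalar_bounds {a b t : ℝ} (h0 : 0 ≤ t) (h1 : t ≤ 1) :
    min a b ≤ a + t * (b - a) ∧ a + t * (b - a) ≤ max a b := by
  rcases le_total a b with h | h
  · rw [min_eq_left h, max_eq_right h]
    constructor <;> nlinarith
  · rw [min_eq_right h, max_eq_left h]
    constructor <;> nlinarith

lemma visit_mem_bounds {p q : ℝ × ℝ} {k l : ℤ}
    (h : (segment ℝ p q ∩ tileInt 1 1 k l).Nonempty) :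
    ⌊min p.1 q.1⌋ ≤ k ∧ k < ⌈max p.1 q.1⌉ ∧ ⌊min p.2 q.2⌋ ≤ l ∧ l < ⌈max p.2 q.2⌉ := by
  obtain ⟨z, hzs, hzt⟩ := h
  simp only [tileInt, mem_prod, mem_Ioo, mul_one] at hzt
  obtain ⟨t, ht0, ht1, hx, hy⟩ := seg_param hzs
  have bx := scalar_bounds (a := p.1) (b := q.1) ht0 ht1
  have by' := scalar_bounds (a := p.2) (b := q.2) ht0 ht1
  rw [← hx] at bx; rw [← hy] at by'
  refine ⟨?_, ?_, ?_, ?_⟩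
  · have : ⌊min p.1 q.1⌋ < k + 1 := by
      rw [Int.floor_lt]; push_cast; linarith [hzt.1.2]
    omega
  · rw [Int.lt_ceil]; linarith [hzt.1.1]
  · have : ⌊min p.2 q.2⌋ < l + 1 := by
      rw [Int.floor_lt]; push_cast; linarith [hzt.2.2]
    omega
  · rw [Int.lt_ceil]; linarith [hzt.2.1]

lemma visit_subset (p q : ℝ × ℝ) :
    {kl : ℤ × ℤ | (segment ℝ p q ∩ tileInt 1 1 kl.1 kl.2).Nonempty} ⊆
      Icc ⌊min p.1 q.1⌋ (⌈max p.1 q.1⌉ - 1) ×ˢ Icc ⌊min p.2 q.2⌋ (⌈max p.2 q.2⌉ - 1) := by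
  rintro ⟨k, l⟩ h
  obtain ⟨h1, h2, h3, h4⟩ := visit_mem_bounds h
  exact ⟨⟨h1, by omega⟩, ⟨h3, by omega⟩⟩

lemma visit_finite (p q : ℝ × ℝ) :
    {kl : ℤ × ℤ | (segment ℝ p q ∩ tileInt 1 1 kl.1 kl.2).Nonempty}.Finite :=
  Set.Finite.subset ((Set.finite_Icc _ _).prod (Set.finite_Icc _ _)) (visit_subset p q)

-- injectivity of the sum map on visited tiles, monotone case
lemma sum_inj_core {p q : ℝ × ℝ} (hx : p.1 ≤ q.1) (hy : p.2 ≤ q.2) {k l k' l' : ℤ}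
    (h1 : (segment ℝ p q ∩ tileInt 1 1 k l).Nonempty)
    (h2 : (segment ℝ p q ∩ tileInt 1 1 k' l').Nonempty)
    (hk : k < k') (hl : l' < l) : False := by
  obtain ⟨z, hzs, hzt⟩ := h1
  obtain ⟨w, hws, hwt⟩ := h2
  simp only [tileInt, mem_prod, mem_Ioo, mul_one] at hzt hwt
  obtain ⟨t, ht0, ht1, hx1, hy1⟩ := seg_param hzs
  obtain ⟨t', ht0', ht1', hx2, hy2⟩ := seg_param hws
  -- z.1 < k+1 ≤ k' < w.1 ⇒ z.1 < w.1 ⇒ t < t' ⇒ z.2 ≤ w.2, but w.2 < l'+1 ≤ l < z.2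
  have hzw : z.1 < w.1 := by
    have : (k:ℝ) + 1 ≤ (k':ℝ) := by exact_mod_cast hk
    linarith [hzt.1.2, hwt.1.1]
  have htt : t < t' := by
    by_contra hcon
    push_neg at hcon
    have : w.1 ≤ z.1 := by rw [hx1, hx2]; nlinarith
    linarith
  have : z.2 ≤ w.2 := by rw [hy1, hy2]; nlinarith
  have : (l':ℝ) + 1 ≤ (l:ℝ) := by exact_mod_cast hl
  linarith [hwt.2.2, hzt.2.1]

lemma sum_injOn {p q : ℝ × ℝ} (hx : p.1 ≤ q.1) (hy : p.2 ≤ q.2) :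
    Set.InjOn (fun kl : ℤ × ℤ => kl.1 + kl.2)
      {kl : ℤ × ℤ | (segment ℝ p q ∩ tileInt 1 1 kl.1 kl.2).Nonempty} := by
  rintro ⟨k, l⟩ h1 ⟨k', l'⟩ h2 hsum
  simp only [mem_setOf_eq] at h1 h2
  simp only at hsum
  rcases lt_trichotomy k k' with h | h | h
  · exact absurd (sum_inj_core hx hy h1 h2 h (by omega)) (fun x => x)
  · simp [Prod.ext_iff, h]; omega
  · exact absurd (sum_inj_core hx hy h2 h1 h (by omega)) (fun x => x)

lemma ncard_Icc_int (a b : ℤ) : (Set.Icc a b).ncard = (b + 1 - a).toNat := by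
  simp [Set.ncard_eq_toFinset_card']

lemma upper_card_mono {p q : ℝ × ℝ} (hx : p.1 ≤ q.1) (hy : p.2 ≤ q.2) :
    visitCount 1 1 p q = 0 ∨ (visitCount 1 1 p q : ℤ) ≤
      (⌈max p.1 q.1⌉ - ⌊min p.1 q.1⌋) + (⌈max p.2 q.2⌉ - ⌊min p.2 q.2⌋) - 1 := by
  set V := {kl : ℤ × ℤ | (segment ℝ p q ∩ tileInt 1 1 kl.1 kl.2).Nonempty} with hV
  rcases Set.eq_empty_or_nonempty V with hE | hNE
  · left
    rw [visitCount, ← hV, hE, Set.ncard_empty]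
  right
  obtain ⟨⟨k0, l0⟩, hk0⟩ := hNE
  obtain ⟨g1, g2, g3, g4⟩ := visit_mem_bounds hk0
  have hinj := sum_injOn hx hy
  have himg : (fun kl : ℤ × ℤ => kl.1 + kl.2) '' V ⊆
      Icc (⌊min p.1 q.1⌋ + ⌊min p.2 q.2⌋) ((⌈max p.1 q.1⌉ - 1) + (⌈max p.2 q.2⌉ - 1)) := by
    rintro m ⟨⟨k, l⟩, hkl, rfl⟩
    obtain ⟨h1, h2, h3, h4⟩ := visit_mem_bounds hkl
    simp only [mem_Icc]
    exact ⟨by omega, by omega⟩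
  have hcard : visitCount 1 1 p q = ((fun kl : ℤ × ℤ => kl.1 + kl.2) '' V).ncard :=
    (Set.ncard_image_of_injOn hinj).symm
  have hle : ((fun kl : ℤ × ℤ => kl.1 + kl.2) '' V).ncard ≤
      (Icc (⌊min p.1 q.1⌋ + ⌊min p.2 q.2⌋) ((⌈max p.1 q.1⌉ - 1) + (⌈max p.2 q.2⌉ - 1))).ncard :=
    Set.ncard_le_ncard himg (Set.finite_Icc _ _)
  rw [ncard_Icc_int] at hle
  rw [hcard]
  have hle' : (((fun kl : ℤ × ℤ => kl.1 + kl.2) '' V).ncard : ℤ) ≤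
      ((((⌈max p.1 q.1⌉ - 1) + (⌈max p.2 q.2⌉ - 1)) + 1 - (⌊min p.1 q.1⌋ + ⌊min p.2 q.2⌋)).toNat : ℤ) := by
    exact_mod_cast hle
  have h1 : ⌊min p.1 q.1⌋ ≤ ⌈max p.1 q.1⌉ := le_trans (Int.floor_le_ceil _)
    (Int.ceil_le_ceil (le_trans (min_le_left _ _) (le_max_left _ _)))
  have h2 : ⌊min p.2 q.2⌋ ≤ ⌈max p.2 q.2⌉ := le_trans (Int.floor_le_ceil _)
    (Int.ceil_le_ceil (le_trans (min_le_left _ _) (le_max_left _ _)))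
  omega

lemma arith_upper {W H : ℤ} {dx dy ℓ : ℝ} (hdx : 0 ≤ dx) (hdy : 0 ≤ dy)
    (hW : (W:ℝ) - 2 < dx) (hH : (H:ℝ) - 2 < dy) (hl : dx^2 + dy^2 = ℓ^2) (hℓ : 0 < ℓ) :
    W + H - 1 ≤ ⌊Real.sqrt (2 * (⌈ℓ^2⌉ : ℝ) - 2)⌋ + 3 := by
  set u : ℤ := max (W - 2) 0 with hu
  set v : ℤ := max (H - 2) 0 with hv
  have hu0 : 0 ≤ u := le_max_right _ _
  have hv0 : 0 ≤ v := le_max_right _ _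
  have hur : (u:ℝ) < dx ∨ u = 0 := by
    rcases le_or_gt (W - 2) 0 with h | h
    · right; omega
    · left
      have : u = W - 2 := by omega
      rw [this]; push_cast; exact hW
  have hvr : (v:ℝ) < dy ∨ v = 0 := by
    rcases le_or_gt (H - 2) 0 with h | h
    · right; omega
    · left
      have : v = H - 2 := by omega
      rw [this]; push_cast; exact hH
  -- claim 1 : (u:ℝ)^2 + (v:ℝ)^2 < ℓ^2
  have hclaim1 : (u:ℝ)^2 + (v:ℝ)^2 < ℓ^2 := by
    have hu2 : (u:ℝ)^2 ≤ dx^2 ∨ ((u:ℝ)^2 < dx^2 ∧ True) := by exact Or.inl (by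
      rcases hur with h | h
      · nlinarith [(by exact_mod_cast hu0 : (0:ℝ) ≤ (u:ℝ))]
      · rw [h]; push_cast; nlinarith)
    rcases hur with h | h <;> rcases hvr with h' | h'
    · nlinarith [(by exact_mod_cast hu0 : (0:ℝ) ≤ (u:ℝ)), (by exact_mod_cast hv0 : (0:ℝ) ≤ (v:ℝ))]
    · rw [h']; push_cast
      nlinarith [(by exact_mod_cast hu0 : (0:ℝ) ≤ (u:ℝ))]
    · rw [h]; push_cast
      nlinarith [(by exact_mod_cast hv0 : (0:ℝ) ≤ (v:ℝ))]
    · rw [h, h']; push_cast; nlinarith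
  -- claim 2 : u^2 + v^2 ≤ ⌈ℓ^2⌉ - 1 in ℤ
  have hclaim2 : u^2 + v^2 ≤ ⌈ℓ^2⌉ - 1 := by
    have h1 : ((u^2 + v^2 : ℤ) : ℝ) < ((⌈ℓ^2⌉ : ℤ) : ℝ) := by
      push_cast
      calc (u:ℝ)^2 + (v:ℝ)^2 < ℓ^2 := hclaim1
        _ ≤ (⌈ℓ^2⌉ : ℝ) := Int.le_ceil _
    have h2 : u^2 + v^2 < ⌈ℓ^2⌉ := by exact_mod_cast h1
    omega
  -- claim 3
  have hclaim3 : ((u + v : ℤ) : ℝ) ≤ Real.sqrt (2 * (⌈ℓ^2⌉ : ℝ) - 2) := by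
    rw [show (2 * (⌈ℓ^2⌉ : ℝ) - 2) = ((2 * ⌈ℓ^2⌉ - 2 : ℤ) : ℝ) by push_cast; ring]
    rw [Real.le_sqrt (by positivity)]
    swap
    · have : (0:ℤ) ≤ 2 * ⌈ℓ^2⌉ - 2 := by nlinarith [sq_nonneg u, sq_nonneg v]
      exact_mod_cast this
    have : (u + v)^2 ≤ 2 * ⌈ℓ^2⌉ - 2 := by nlinarith [sq_nonneg (u - v)]
    exact_mod_cast this
  have hfin : u + v ≤ ⌊Real.sqrt (2 * (⌈ℓ^2⌉ : ℝ) - 2)⌋ := Int.le_floor.2 hclaim3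
  omega

lemma segLen_sq {p q : ℝ × ℝ} {ℓ : ℝ} (hl : segLen p q = ℓ) (hℓ : 0 < ℓ) :
    (max p.1 q.1 - min p.1 q.1)^2 + (max p.2 q.2 - min p.2 q.2)^2 = ℓ^2 := by
  have h1 : (max p.1 q.1 - min p.1 q.1)^2 = (p.1 - q.1)^2 := by
    rcases le_total p.1 q.1 with h | h <;>
      simp [max_eq_right, max_eq_left, min_eq_left, min_eq_right, h] <;> ring
  have h2 : (max p.2 q.2 - min p.2 q.2)^2 = (p.2 - q.2)^2 := by
    rcases le_total p.2 q.2 with h | h <;>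
      simp [max_eq_right, max_eq_left, min_eq_left, min_eq_right, h] <;> ring
  rw [h1, h2]
  have := Real.sq_sqrt (by positivity : (0:ℝ) ≤ (p.1 - q.1)^2 + (p.2 - q.2)^2)
  rw [segLen] at hl
  rw [← this, hl]

lemma upper_mono {p q : ℝ × ℝ} {ℓ : ℝ} (hx : p.1 ≤ q.1) (hy : p.2 ≤ q.2)
    (hl : segLen p q = ℓ) (hℓ : 0 < ℓ) :
    (visitCount 1 1 p q : ℤ) ≤ ⌊Real.sqrt (2 * (⌈ℓ^2⌉ : ℝ) - 2)⌋ + 3 := by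
  have hfloor0 : 0 ≤ ⌊Real.sqrt (2 * (⌈ℓ^2⌉ : ℝ) - 2)⌋ := by
    apply Int.floor_nonneg.2 (Real.sqrt_nonneg _)
  rcases upper_card_mono hx hy with h | h
  · rw [h]; push_cast; omega
  · refine le_trans h ?_
    apply arith_upper (dx := max p.1 q.1 - min p.1 q.1) (dy := max p.2 q.2 - min p.2 q.2)
    · have := min_le_max (a := p.1) (b := q.1); linarith
    · have := min_le_max (a := p.2) (b := q.2); linarith
    · push_cast
      have c1 := Int.ceil_lt_add_one (max p.1 q.1)
      have c2 := Int.sub_one_lt_floor (min p.1 q.1)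
      linarith
    · push_cast
      have c1 := Int.ceil_lt_add_one (max p.2 q.2)
      have c2 := Int.sub_one_lt_floor (min p.2 q.2)
      linarith
    · exact segLen_sq hl hℓ
    · exact hℓ

lemma seg_negX {p q w : ℝ × ℝ} (h : w ∈ segment ℝ p q) :
    ((-w.1, w.2) : ℝ × ℝ) ∈ segment ℝ (-p.1, p.2) (-q.1, q.2) := by
  rw [segment_eq_image'] at h ⊢
  obtain ⟨t, ht, rfl⟩ := h
  refine ⟨t, ht, ?_⟩
  simp [Prod.ext_iff]
  ring

lemma seg_negY {p q w : ℝ × ℝ} (h : w ∈ segment ℝ p q) :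
    ((w.1, -w.2) : ℝ × ℝ) ∈ segment ℝ (p.1, -p.2) (q.1, -q.2) := by
  rw [segment_eq_image'] at h ⊢
  obtain ⟨t, ht, rfl⟩ := h
  refine ⟨t, ht, ?_⟩
  simp [Prod.ext_iff]
  ring

lemma visitNE_negX {p q : ℝ × ℝ} {k l : ℤ}
    (h : (segment ℝ p q ∩ tileInt 1 1 k l).Nonempty) :
    (segment ℝ (-p.1, p.2) (-q.1, q.2) ∩ tileInt 1 1 (-k - 1) l).Nonempty := by
  obtain ⟨w, hs, ht⟩ := h
  refine ⟨(-w.1, w.2), seg_negX hs, ?_⟩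
  simp only [tileInt, mem_prod, mem_Ioo, mul_one] at ht ⊢
  push_cast
  exact ⟨⟨by linarith [ht.1.2], by linarith [ht.1.1]⟩, ht.2⟩

lemma visitNE_negY {p q : ℝ × ℝ} {k l : ℤ}
    (h : (segment ℝ p q ∩ tileInt 1 1 k l).Nonempty) :
    (segment ℝ (p.1, -p.2) (q.1, -q.2) ∩ tileInt 1 1 k (-l - 1)).Nonempty := by
  obtain ⟨w, hs, ht⟩ := h
  refine ⟨(w.1, -w.2), seg_negY hs, ?_⟩
  simp only [tileInt, mem_prod, mem_Ioo, mul_one] at ht ⊢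
  push_cast
  exact ⟨ht.1, ⟨by linarith [ht.2.2], by linarith [ht.2.1]⟩⟩

lemma visit_negX (p q : ℝ × ℝ) :
    visitCount 1 1 p q = visitCount 1 1 (-p.1, p.2) (-q.1, q.2) := by
  rw [visitCount, visitCount]
  have hset : {kl : ℤ × ℤ | (segment ℝ (-p.1, p.2) (-q.1, q.2) ∩ tileInt 1 1 kl.1 kl.2).Nonempty}
      = (fun kl : ℤ × ℤ => (-kl.1 - 1, kl.2)) ''
        {kl : ℤ × ℤ | (segment ℝ p q ∩ tileInt 1 1 kl.1 kl.2).Nonempty} := by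
    ext ⟨k, l⟩
    simp only [mem_setOf_eq, Set.mem_image]
    constructor
    · intro h
      have h2 := visitNE_negX h
      simp only [neg_neg, Prod.mk.eta] at h2
      exact ⟨(-k - 1, l), h2, by simp [Prod.ext_iff]⟩
    · rintro ⟨⟨k', l'⟩, h', heq⟩
      have h2 := visitNE_negX h'
      simp only [Prod.ext_iff] at heq
      rw [← heq.1, ← heq.2]
      exact h2
  rw [hset, Set.ncard_image_of_injective _ (by
    intro a b hab
    simp only [Prod.ext_iff] at hab
    exact Prod.ext (by omega) (by exact hab.2))]

lemma visit_negY (p q : ℝ × ℝ) :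
    visitCount 1 1 p q = visitCount 1 1 (p.1, -p.2) (q.1, -q.2) := by
  rw [visitCount, visitCount]
  have hset : {kl : ℤ × ℤ | (segment ℝ (p.1, -p.2) (q.1, -q.2) ∩ tileInt 1 1 kl.1 kl.2).Nonempty}
      = (fun kl : ℤ × ℤ => (kl.1, -kl.2 - 1)) ''
        {kl : ℤ × ℤ | (segment ℝ p q ∩ tileInt 1 1 kl.1 kl.2).Nonempty} := by
    ext ⟨k, l⟩
    simp only [mem_setOf_eq, Set.mem_image]
    constructor
    · intro h
      have h2 := visitNE_negY h
      simp only [neg_neg, Prod.mk.eta] at h2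
      exact ⟨(k, -l - 1), h2, by simp [Prod.ext_iff]⟩
    · rintro ⟨⟨k', l'⟩, h', heq⟩
      have h2 := visitNE_negY h'
      simp only [Prod.ext_iff] at heq
      rw [← heq.1, ← heq.2]
      exact h2
  rw [hset, Set.ncard_image_of_injective _ (by
    intro a b hab
    simp only [Prod.ext_iff] at hab
    exact Prod.ext (by exact hab.1) (by omega))]

lemma visit_swap (p q : ℝ × ℝ) : visitCount 1 1 p q = visitCount 1 1 q p := by
  rw [visitCount, visitCount, segment_symm]

lemma segLen_negX (p q : ℝ × ℝ) : segLen ((-p.1, p.2) : ℝ × ℝ) ((-q.1, q.2) : ℝ × ℝ) = segLen p q := by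
  rw [segLen, segLen]; ring_nf

lemma segLen_negY (p q : ℝ × ℝ) : segLen ((p.1, -p.2) : ℝ × ℝ) ((q.1, -q.2) : ℝ × ℝ) = segLen p q := by
  rw [segLen, segLen]; ring_nf

lemma segLen_swap (p q : ℝ × ℝ) : segLen q p = segLen p q := by
  rw [segLen, segLen]; ring_nf

lemma upper_all {p q : ℝ × ℝ} {ℓ : ℝ} (hl : segLen p q = ℓ) (hℓ : 0 < ℓ) :
    (visitCount 1 1 p q : ℤ) ≤ ⌊Real.sqrt (2 * (⌈ℓ^2⌉ : ℝ) - 2)⌋ + 3 := by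
  rcases le_total p.1 q.1 with h1 | h1 <;> rcases le_total p.2 q.2 with h2 | h2
  · exact upper_mono h1 h2 hl hℓ
  · rw [visit_negY]
    exact upper_mono (by simpa using h1) (by simpa using h2)
      (by rw [segLen_negY]; exact hl) hℓ
  · rw [visit_negX]
    exact upper_mono (by simpa using h1) (by simpa using h2)
      (by rw [segLen_negX]; exact hl) hℓ
  · rw [visit_swap]
    exact upper_mono h1 h2 (by rw [segLen_swap]; exact hl) hℓ

set_option maxHeartbeats 2000000 in
lemma lower_exists {ℓ : ℝ} (hℓ : 0 < ℓ) :
    ∃ p q : ℝ × ℝ, segLen p q = ℓ ∧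
      ⌊Real.sqrt (2 * (⌈ℓ^2⌉ : ℝ) - 2)⌋ + 3 ≤ (visitCount 1 1 p q : ℤ) := by
  set s := ⌊Real.sqrt (2 * (⌈ℓ^2⌉ : ℝ) - 2)⌋ with hsdef
  set C : ℤ := ⌈ℓ^2⌉ - 1 with hC
  have hl2 : (0:ℝ) < ℓ^2 := by positivity
  have hceil1 : 1 ≤ ⌈ℓ^2⌉ := by
    have := Int.ceil_pos.mpr hl2
    omega
  have hC0 : 0 ≤ C := by omega
  have hCr : (C:ℝ) = (⌈ℓ^2⌉:ℝ) - 1 := by rw [hC]; push_cast; ring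
  have hs0 : 0 ≤ s := Int.floor_nonneg.2 (Real.sqrt_nonneg _)
  have harg : (0:ℝ) ≤ 2 * (⌈ℓ^2⌉ : ℝ) - 2 := by
    have : (1:ℝ) ≤ (⌈ℓ^2⌉ : ℝ) := by exact_mod_cast hceil1
    linarith
  have hs2 : s^2 ≤ 2*C := by
    have h1 : (s:ℝ) ≤ Real.sqrt (2 * (⌈ℓ^2⌉ : ℝ) - 2) := Int.floor_le _
    have h2 : (s:ℝ)^2 ≤ 2 * (⌈ℓ^2⌉ : ℝ) - 2 := by
      nlinarith [Real.sq_sqrt harg, Real.sqrt_nonneg (2 * (⌈ℓ^2⌉ : ℝ) - 2),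
        (by exact_mod_cast hs0 : (0:ℝ) ≤ (s:ℝ))]
    have h3 : ((s:ℝ))^2 ≤ 2*(C:ℝ) := by rw [hCr]; linarith
    have : ((s^2 : ℤ) : ℝ) ≤ ((2*C : ℤ) : ℝ) := by push_cast; linarith
    exact_mod_cast this
  set u : ℤ := (s+1)/2 with hu
  set v : ℤ := s/2 with hv
  have huv : u + v = s := by omega
  have hu0 : 0 ≤ u := by omega
  have hv0 : 0 ≤ v := by omega
  have hcases : u = v ∨ u = v + 1 := by omega
  have huv2 : u^2 + v^2 ≤ C := by
    rcases hcases with h | h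
    · have hs' : s = 2*v := by omega
      rw [hs'] at hs2
      nlinarith
    · have hs' : s = 2*v + 1 := by omega
      rw [hs'] at hs2
      have h4 : 4*(v*v) + 4*v + 1 ≤ 2*C := by nlinarith
      have h5 : 2*(v*v) + 2*v + 1 ≤ C := by omega
      calc u^2 + v^2 = 2*(v*v) + 2*v + 1 := by rw [h]; ring
        _ ≤ C := h5
  have hCl : (C:ℝ) < ℓ^2 := by
    rw [hCr]
    linarith [Int.ceil_lt_add_one (ℓ^2)]
  have huvR : (u:ℝ)^2 + (v:ℝ)^2 < ℓ^2 := by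
    have : ((u^2 + v^2 : ℤ):ℝ) ≤ (C:ℝ) := by exact_mod_cast huv2
    push_cast at this
    linarith
  have huR : (0:ℝ) ≤ (u:ℝ) := by exact_mod_cast hu0
  have hvR : (0:ℝ) ≤ (v:ℝ) := by exact_mod_cast hv0
  set A := Real.sqrt (ℓ^2 - (u:ℝ)^2) with hA
  have hA2 : A^2 = ℓ^2 - (u:ℝ)^2 := Real.sq_sqrt (by nlinarith)
  have hA0 : 0 ≤ A := Real.sqrt_nonneg _
  have hvA : (v:ℝ) < A := by nlinarith
  set dy := ((v:ℝ) + A)/2 with hdy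
  have hdyv : (v:ℝ) < dy := by rw [hdy]; linarith
  have hdyA : dy < A := by rw [hdy]; linarith
  have hdy0 : 0 < dy := lt_of_le_of_lt hvR hdyv
  set dx := Real.sqrt (ℓ^2 - dy^2) with hdx
  have hdylℓ : dy^2 < ℓ^2 - (u:ℝ)^2 := by nlinarith
  have hdx2 : dx^2 = ℓ^2 - dy^2 := Real.sq_sqrt (by nlinarith)
  have hdx0' : 0 ≤ dx := Real.sqrt_nonneg _
  have hdxu : (u:ℝ) < dx := by nlinarith
  have hdx0 : 0 < dx := lt_of_le_of_lt huR hdxu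
  have hsum : dx^2 + dy^2 = ℓ^2 := by rw [hdx2]; ring
  -- choose θ
  have hη1 : (0:ℝ) < min 1 (dx - u) := lt_min one_pos (by linarith)
  obtain ⟨θ, hθI, hθB⟩ := exists_notin_countable (show (0:ℝ) < min 1 (dx - u) from hη1)
    (B := ⋃ n : ℤ, {dx - (n:ℝ)}) (Set.countable_iUnion fun _ => Set.countable_singleton _)
  have hθ0 : 0 < θ := hθI.1
  have hθ1 : θ < 1 := lt_of_lt_of_le hθI.2 (min_le_left _ _)
  have hθu : (u:ℝ) < dx - θ := by
    have := lt_of_lt_of_le hθI.2 (min_le_right _ _)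
    linarith
  have h1x : ∀ n : ℤ, 1 * dx - θ ≠ (n:ℝ) := by
    intro n hn
    apply hθB
    rw [Set.mem_iUnion]
    exact ⟨n, by rw [mem_singleton_iff]; linarith⟩
  -- choose θ'
  have hη2 : (0:ℝ) < min 1 (dy - v) := lt_min one_pos (by linarith)
  obtain ⟨θ', hθ'I, hθ'B⟩ := exists_notin_countable (show (0:ℝ) < min 1 (dy - v) from hη2)
    (B := (⋃ n : ℤ, {dy - (n:ℝ)}) ∪ (⋃ nm : ℤ × ℤ, {(dy*((nm.1:ℝ) + θ))/dx - (nm.2:ℝ)}))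
    ((Set.countable_iUnion fun _ => Set.countable_singleton _).union
      (Set.countable_iUnion fun _ => Set.countable_singleton _))
  have hθ'0 : 0 < θ' := hθ'I.1
  have hθ'1 : θ' < 1 := lt_of_lt_of_le hθ'I.2 (min_le_left _ _)
  have hθ'v : (v:ℝ) < dy - θ' := by
    have := lt_of_lt_of_le hθ'I.2 (min_le_right _ _)
    linarith
  have h1y : ∀ n : ℤ, 1 * dy - θ' ≠ (n:ℝ) := by
    intro n hn
    apply hθ'B
    left
    rw [Set.mem_iUnion]
    exact ⟨n, by rw [mem_singleton_iff]; linarith⟩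
  have havoid : ∀ t : ℝ, ¬((∃ n : ℤ, t * dx - θ = (n:ℝ)) ∧ (∃ n : ℤ, t * dy - θ' = (n:ℝ))) := by
    rintro t ⟨⟨n, hn⟩, ⟨n', hn'⟩⟩
    apply hθ'B
    right
    rw [Set.mem_iUnion]
    refine ⟨(n, n'), ?_⟩
    rw [mem_singleton_iff]
    have ht : t = ((n:ℝ) + θ)/dx := by field_simp; linarith
    rw [ht] at hn'
    field_simp at hn' ⊢
    linarith
  -- the segment
  set p : ℝ × ℝ := (-θ, -θ') with hp
  set q : ℝ × ℝ := (dx - θ, dy - θ') with hq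
  have hseglen : segLen p q = ℓ := by
    rw [segLen, hp, hq]
    simp only
    have : (-θ - (dx - θ))^2 + (-θ' - (dy - θ'))^2 = ℓ^2 := by rw [← hsum]; ring
    rw [this]
    exact Real.sqrt_sq hℓ.le
  -- endpoints of gf
  have hg0 : gf dx dy θ θ' 0 = -2 := by
    unfold gf
    have e1 : ⌊(0:ℝ) * dx - θ⌋ = -1 := by
      rw [Int.floor_eq_iff]
      constructor
      · push_cast; linarith
      · push_cast; linarith
    have e2 : ⌊(0:ℝ) * dy - θ'⌋ = -1 := by
      rw [Int.floor_eq_iff]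
      constructor
      · push_cast; linarith
      · push_cast; linarith
    rw [e1, e2]
    norm_num
  have hg1 : u + v ≤ gf dx dy θ θ' 1 := by
    unfold gf
    have e1 : u ≤ ⌊(1:ℝ) * dx - θ⌋ := Int.le_floor.2 (by rw [one_mul]; linarith)
    have e2 : v ≤ ⌊(1:ℝ) * dy - θ'⌋ := Int.le_floor.2 (by rw [one_mul]; linarith)
    omega
  -- each m in [-2, u+v] gives a visited tile
  set V := {kl : ℤ × ℤ | (segment ℝ p q ∩ tileInt 1 1 kl.1 kl.2).Nonempty} with hV
  have hsurj : ∀ m ∈ Set.Icc (-2 : ℤ) (u + v), ∃ kl ∈ V, kl.1 + kl.2 = m := by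
    rintro m ⟨hm1, hm2⟩
    obtain ⟨t, ht0, ht1, hgt, hnx, hny⟩ := key_ivt hdx0 hdy0 havoid h1x h1y m
      (by omega) (by omega)
    set z : ℝ × ℝ := (t * dx - θ, t * dy - θ') with hz
    refine ⟨(⌊z.1⌋, ⌊z.2⌋), ⟨z, ?_, ?_⟩, ?_⟩
    · rw [segment_eq_image']
      refine ⟨t, ⟨ht0, ht1⟩, ?_⟩
      rw [hp, hq, hz]
      simp [Prod.ext_iff]
      constructor <;> ring
    · simp only [tileInt, mem_prod, mem_Ioo, mul_one]
      have l1 : (⌊z.1⌋:ℝ) < z.1 :=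
        lt_of_le_of_ne (Int.floor_le _) (fun h => hnx ⌊z.1⌋ h.symm)
      have l2 : (⌊z.2⌋:ℝ) < z.2 :=
        lt_of_le_of_ne (Int.floor_le _) (fun h => hny ⌊z.2⌋ h.symm)
      exact ⟨⟨l1, Int.lt_floor_add_one _⟩, ⟨l2, Int.lt_floor_add_one _⟩⟩
    · unfold gf at hgt
      rw [hz]
      simpa using hgt
  have hVfin : V.Finite := visit_finite p q
  have hsub : Set.Icc (-2 : ℤ) (u + v) ⊆ (fun kl : ℤ × ℤ => kl.1 + kl.2) '' V := by
    intro m hm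
    obtain ⟨kl, hkl, hklm⟩ := hsurj m hm
    exact ⟨kl, hkl, hklm⟩
  have hc1 : (Set.Icc (-2 : ℤ) (u + v)).ncard ≤ ((fun kl : ℤ × ℤ => kl.1 + kl.2) '' V).ncard :=
    Set.ncard_le_ncard hsub (hVfin.image _)
  have hc2 : ((fun kl : ℤ × ℤ => kl.1 + kl.2) '' V).ncard ≤ V.ncard :=
    Set.ncard_image_le hVfin
  rw [ncard_Icc_int] at hc1
  refine ⟨p, q, hseglen, ?_⟩
  have hcount : visitCount 1 1 p q = V.ncard := rfl
  rw [hcount]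
  have : ((u + v + 1 - (-2)).toNat : ℤ) ≤ (V.ncard : ℤ) := by
    have := le_trans hc1 hc2
    exact_mod_cast this
  rw [Int.toNat_of_nonneg (by omega)] at this
  omega

theorem stmt_12 (ℓ : ℝ) (hℓ : 0 < ℓ) :
    (maxTiles 1 1 ℓ : ℤ) = ⌊Real.sqrt (2 * (⌈ℓ ^ 2⌉ : ℝ) - 2)⌋ + 3 := by
  set s := ⌊Real.sqrt (2 * (⌈ℓ ^ 2⌉ : ℝ) - 2)⌋ with hs
  have hs0 : 0 ≤ s := Int.floor_nonneg.2 (Real.sqrt_nonneg _)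
  set B : ℕ := s.toNat + 3 with hB
  have hBZ : (B:ℤ) = s + 3 := by rw [hB]; push_cast; omega
  set T := {n : ℕ | ∃ p q : ℝ × ℝ, segLen p q = ℓ ∧ visitCount 1 1 p q = n} with hT
  have hub : ∀ n ∈ T, n ≤ B := by
    rintro n ⟨p, q, hpq, rfl⟩
    have h1 := upper_all hpq hℓ
    have h2 : (visitCount 1 1 p q : ℤ) ≤ (B:ℤ) := by rw [hBZ]; exact h1
    exact_mod_cast h2
  have hmem : B ∈ T := by
    obtain ⟨p, q, hpq, hge⟩ := lower_exists hℓ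
    refine ⟨p, q, hpq, ?_⟩
    have hle := upper_all hpq hℓ
    have h3 : (visitCount 1 1 p q : ℤ) = (B:ℤ) := by
      rw [hBZ]; exact le_antisymm hle hge
    exact_mod_cast h3
  have hmax : maxTiles 1 1 ℓ = B := by
    rw [maxTiles]
    apply le_antisymm
    · exact csSup_le ⟨B, hmem⟩ hub
    · exact le_csSup ⟨B, hub⟩ hmem
  rw [hmax, hBZ]
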